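/- Let A be an m×n real matrix and let A₁₁ be a nonsingular k×k submatrix of A having local ρ-maximum volume in A for some ρ ≥ 1 (if k = min(m,n), local ρ-maximum volume means global ρ-maximum volume among all k×k submatrices obtained by exchanging one row and/or one column). Then σ_k(A) ≤ ρk√((m−k+1)(n−k+1))·σ_k(A₁₁). -/

import Mathlib

open Matrix

/-- The `k`-th largest value (1-indexed) of a finite family of reals. -/
noncomputable def kthLargest {ι : Type*} [Fintype ι] (f : ι → ℝ) (k : ℕ) : ℝ :=
  ((Finset.univ.val.map f).sort (· ≤ ·)).getD (Fintype.card ι - k) 0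

/-- The `k`-th largest singular value (1-indexed) of a real matrix,
i.e. the square root of the `k`-th largest eigenvalue of `Aᴴ * A`. -/
noncomputable def singularValue {m n : Type*} [Fintype m] [Fintype n] [DecidableEq n]
    (A : Matrix m n ℝ) (k : ℕ) : ℝ :=
  Real.sqrt (kthLargest (Matrix.isHermitian_conjTranspose_mul_self A).eigenvalues k)

lemma kthLargest_exists_eq {ι : Type*} [Fintype ι] (f : ι → ℝ) {k : ℕ}
    (hk1 : 1 ≤ k) (hk : k ≤ Fintype.card ι) : ∃ i, kthLargest f k = f i := by
  classical
  set l := (Finset.univ.val.map f).sort (· ≤ ·) with hl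
  have hlen : l.length = Fintype.card ι := by simp [hl, Multiset.length_sort]
  have hidx : Fintype.card ι - k < l.length := by omega
  have hmem : l.getD (Fintype.card ι - k) 0 ∈ l := by
    rw [List.getD_eq_getElem _ _ hidx]
    exact List.getElem_mem _
  have : l.getD (Fintype.card ι - k) 0 ∈ Multiset.map f Finset.univ.val :=
    (Multiset.mem_sort _).mp hmem
  obtain ⟨i, _, hi⟩ := Multiset.mem_map.mp this
  exact ⟨i, hi.symm⟩
lemma kthLargest_exists_finset {ι : Type*} [Fintype ι] (f : ι → ℝ) {k : ℕ}
    (hk1 : 1 ≤ k) (hk : k ≤ Fintype.card ι) :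
    ∃ S : Finset ι, S.card = k ∧ ∀ i ∈ S, kthLargest f k ≤ f i := by
  classical
  set l := (Finset.univ.val.map f).sort (· ≤ ·) with hl
  have hlen : l.length = Fintype.card ι := by simp [hl, Multiset.length_sort]
  have hidx : Fintype.card ι - k < l.length := by omega
  have hsort : l.Pairwise (· ≤ ·) := Multiset.pairwise_sort _ _
  have hveq : kthLargest f k = l[Fintype.card ι - k]'hidx :=
    List.getD_eq_getElem _ _ hidx
  have h1 : ∀ (o : ℕ) (ho : o < (l.drop (Fintype.card ι - k)).length),
      kthLargest f k ≤ (l.drop (Fintype.card ι - k))[o] := by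
    intro o ho
    have ho' : Fintype.card ι - k + o < l.length := by
      rw [List.length_drop] at ho; omega
    have e : (l.drop (Fintype.card ι - k))[o] = l[Fintype.card ι - k + o]'ho' :=
      List.getElem_drop
    rw [e, hveq]
    have := hsort.rel_get_of_le (a := ⟨Fintype.card ι - k, hidx⟩)
      (b := ⟨Fintype.card ι - k + o, ho'⟩) (by simp)
    simpa using this
  have hcount : k ≤ l.countP (fun x => decide (kthLargest f k ≤ x)) := by
    have h2 : (l.drop (Fintype.card ι - k)).countP (fun x => decide (kthLargest f k ≤ x))
        = (l.drop (Fintype.card ι - k)).length := by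
      rw [List.countP_eq_length]
      intro a ha
      obtain ⟨o, ho, rfl⟩ := List.mem_iff_getElem.mp ha
      simpa using h1 o ho
    calc k = (l.drop (Fintype.card ι - k)).length := by rw [List.length_drop]; omega
      _ = _ := h2.symm
      _ ≤ l.countP (fun x => decide (kthLargest f k ≤ x)) := by
          conv_rhs => rw [← List.take_append_drop (Fintype.card ι - k) l]
          rw [List.countP_append]; omega
  have hcard : k ≤ (Finset.univ.filter (fun i => kthLargest f k ≤ f i)).card := by
    have e1 : Multiset.countP (fun x => kthLargest f k ≤ x) (Multiset.map f Finset.univ.val)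
        = l.countP (fun x => decide (kthLargest f k ≤ x)) := by
      conv_lhs => rw [← Multiset.sort_eq (Multiset.map f Finset.univ.val) (· ≤ ·)]
      rw [Multiset.coe_countP]
    have e2 : Multiset.countP (fun x => kthLargest f k ≤ x) (Multiset.map f Finset.univ.val)
        = Multiset.countP (fun i => kthLargest f k ≤ f i) Finset.univ.val := by
      rw [Multiset.countP_map, ← Multiset.countP_eq_card_filter]
    have e3 : (Finset.univ.filter (fun i => kthLargest f k ≤ f i)).card
        = Multiset.countP (fun i => kthLargest f k ≤ f i) Finset.univ.val := by
      rw [Multiset.countP_eq_card_filter]; rfl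
    omega
  obtain ⟨S, hS, hScard⟩ := Finset.exists_subset_card_eq hcard
  exact ⟨S, hScard, fun i hi => (Finset.mem_filter.mp (hS hi)).2⟩
lemma dot_mulVec_mulVec {m n p : Type*} [Fintype m] [Fintype n] [Fintype p]
    (M : Matrix m n ℝ) (N : Matrix m p ℝ) (a : n → ℝ) (b : p → ℝ) :
    (M *ᵥ a) ⬝ᵥ (N *ᵥ b) = a ⬝ᵥ ((Mᵀ * N) *ᵥ b) := by
  rw [← Matrix.mulVec_mulVec, Matrix.dotProduct_mulVec (M *ᵥ a), ← Matrix.vecMul_transpose,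
    Matrix.dotProduct_mulVec a, Matrix.dotProduct_mulVec (a ᵥ* Mᵀ)]
lemma mulVec_dot_le_frob {m n : Type*} [Fintype m] [Fintype n]
    (M : Matrix m n ℝ) (x : n → ℝ) :
    (M *ᵥ x) ⬝ᵥ (M *ᵥ x) ≤ (∑ i, ∑ j, M i j ^ 2) * (x ⬝ᵥ x) := by
  have h : ∀ i : m, (M *ᵥ x) i ^ 2 ≤ (∑ j, M i j ^ 2) * (∑ j, x j ^ 2) :=
    fun i => Finset.sum_mul_sq_le_sq_mul_sq Finset.univ _ _
  calc (M *ᵥ x) ⬝ᵥ (M *ᵥ x) = ∑ i, (M *ᵥ x) i ^ 2 := by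
        simp [dotProduct, pow_two]
    _ ≤ ∑ i : m, (∑ j, M i j ^ 2) * (∑ j, x j ^ 2) := Finset.sum_le_sum (fun i _ => h i)
    _ = (∑ i, ∑ j, M i j ^ 2) * (x ⬝ᵥ x) := by
        rw [← Finset.sum_mul]; congr 1; simp [dotProduct, pow_two]
lemma kthLargest_gram_le {m n : Type*} [Fintype m] [Fintype n] [DecidableEq n]
    (A B : Matrix m n ℝ) {k : ℕ} (hk1 : 1 ≤ k) (hk : k ≤ Fintype.card n)
    (hrank : B.rank < k) :
    kthLargest (Matrix.isHermitian_conjTranspose_mul_self A).eigenvalues k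
      ≤ ∑ i, ∑ j, (A i j - B i j) ^ 2 := by
  classical
  set h := Matrix.isHermitian_conjTranspose_mul_self A with hh
  set lam := kthLargest h.eigenvalues k with hlam
  obtain ⟨S, hScard, hS⟩ := kthLargest_exists_finset h.eigenvalues hk1 hk
  set U : Matrix n n ℝ := (Matrix.IsHermitian.eigenvectorUnitary h : Matrix n n ℝ) with hU
  set E : Matrix n S ℝ := Matrix.of (fun i s => if i = (s : n) then 1 else 0) with hE
  -- unitarity
  have hUtU : Uᵀ * U = 1 := by
    have := Matrix.mem_unitaryGroup_iff'.mp (Matrix.IsHermitian.eigenvectorUnitary h).2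
    rwa [Matrix.star_eq_conjTranspose, Matrix.conjTranspose_eq_transpose_of_trivial] at this
  have hUUt : U * Uᵀ = 1 := mul_eq_one_comm.mp hUtU
  have hEtE : Eᵀ * E = 1 := by
    ext s t
    simp only [Matrix.mul_apply, Matrix.transpose_apply, hE, Matrix.of_apply, ite_mul, one_mul,
      zero_mul, Matrix.one_apply]
    rw [Finset.sum_ite_eq' Finset.univ (s : n) (fun i => if i = (t : n) then (1:ℝ) else 0)]
    rw [if_pos (Finset.mem_univ _)]
    exact if_congr Subtype.ext_iff.symm rfl rfl
  -- kernel element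
  have hfr : Fintype.card S = k := by simp [hScard]
  have hrank2 : (B * (U * E)).rank < Fintype.card S := by
    rw [hfr]
    exact lt_of_le_of_lt (Matrix.rank_mul_le_left _ _) hrank
  have hker : ∃ c : S → ℝ, c ≠ 0 ∧ (B * (U * E)) *ᵥ c = 0 := by
    have hne : LinearMap.ker (B * (U * E)).mulVecLin ≠ ⊥ := by
      intro hbot
      have hinj : Function.Injective (B * (U * E)).mulVecLin := LinearMap.ker_eq_bot.mp hbot
      have h1 := LinearMap.finrank_range_of_inj hinj
      rw [Module.finrank_fintype_fun_eq_card] at h1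
      have h2 : (B * (U * E)).rank = Fintype.card S := by unfold Matrix.rank; exact h1
      omega
    obtain ⟨c, hc1, hc2⟩ := (Submodule.ne_bot_iff _).mp hne
    exact ⟨c, hc2, by simpa [Matrix.mulVecLin_apply] using hc1⟩
  obtain ⟨c, hc0, hcker⟩ := hker
  set y : n → ℝ := E *ᵥ c with hy
  set x : n → ℝ := U *ᵥ y with hx
  clear_value y
  clear_value x
  have hBx : B *ᵥ x = 0 := by
    rw [hx, hy, Matrix.mulVec_mulVec, Matrix.mulVec_mulVec, Matrix.mul_assoc]
    exact hcker
  -- spectral computation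
  have hspec : Uᵀ * (Aᴴ * A) * U = Matrix.diagonal h.eigenvalues := by
    have := Matrix.IsHermitian.conjStarAlgAut_star_eigenvectorUnitary h
    rw [Unitary.conjStarAlgAut_star_apply] at this
    rw [Matrix.star_eq_conjTranspose, Matrix.conjTranspose_eq_transpose_of_trivial] at this
    simp at this
    exact this
  have hxHx : x ⬝ᵥ ((Aᴴ * A) *ᵥ x) = ∑ i, h.eigenvalues i * y i ^ 2 := by
    calc x ⬝ᵥ ((Aᴴ * A) *ᵥ x) = (U *ᵥ y) ⬝ᵥ (((Aᴴ * A) * U) *ᵥ y) := by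
          rw [hx, Matrix.mulVec_mulVec]
      _ = y ⬝ᵥ ((Uᵀ * ((Aᴴ * A) * U)) *ᵥ y) := dot_mulVec_mulVec _ _ _ _
      _ = y ⬝ᵥ (Matrix.diagonal h.eigenvalues *ᵥ y) := by rw [← Matrix.mul_assoc, hspec]
      _ = ∑ i, h.eigenvalues i * y i ^ 2 := by
          simp only [dotProduct, Matrix.mulVec_diagonal]
          exact Finset.sum_congr rfl fun i _ => by ring
  have hyS : ∀ i : n, y i ≠ 0 → i ∈ S := by
    intro i hyi
    by_contra hiS
    apply hyi
    rw [hy]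
    simp only [Matrix.mulVec, dotProduct, hE, Matrix.of_apply]
    apply Finset.sum_eq_zero
    intro s _
    have : i ≠ (s : n) := fun he => hiS (he ▸ s.2)
    simp [this]
  have hterm : ∀ i : n, lam * y i ^ 2 ≤ h.eigenvalues i * y i ^ 2 := by
    intro i
    by_cases hyi : y i = 0
    · simp [hyi]
    · exact mul_le_mul_of_nonneg_right (hS i (hyS i hyi)) (sq_nonneg _)
  -- norms
  have hyy : y ⬝ᵥ y = c ⬝ᵥ c := by
    rw [hy, dot_mulVec_mulVec, hEtE, Matrix.one_mulVec]
  have hxx : x ⬝ᵥ x = c ⬝ᵥ c := by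
    rw [hx, dot_mulVec_mulVec, hUtU, Matrix.one_mulVec, hyy]
  have hyy' : ∑ i, y i ^ 2 = c ⬝ᵥ c := by
    rw [← hyy]; simp [dotProduct, pow_two]
  have hcc : 0 < c ⬝ᵥ c := by
    obtain ⟨s, hs⟩ := Function.ne_iff.mp hc0
    have hpos : (0:ℝ) < c s ^ 2 := by
      have : c s ≠ 0 := by simpa using hs
      rw [← sq_abs]; exact pow_pos (abs_pos.mpr this) 2
    calc (0:ℝ) < c s ^ 2 := hpos
      _ ≤ ∑ t, c t ^ 2 :=
        Finset.single_le_sum (f := fun t => c t ^ 2) (fun t _ => sq_nonneg _) (Finset.mem_univ s)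
      _ = c ⬝ᵥ c := by simp [dotProduct, pow_two]
  -- chain
  have hAx : (A *ᵥ x) ⬝ᵥ (A *ᵥ x) = x ⬝ᵥ ((Aᴴ * A) *ᵥ x) := by
    rw [dot_mulVec_mulVec, Matrix.conjTranspose_eq_transpose_of_trivial]
  have hABx : A *ᵥ x = (A - B) *ᵥ x := by rw [Matrix.sub_mulVec, hBx, sub_zero]
  have chain : lam * (c ⬝ᵥ c) ≤ (∑ i, ∑ j, (A i j - B i j) ^ 2) * (c ⬝ᵥ c) := by
    calc lam * (c ⬝ᵥ c) = ∑ i, lam * y i ^ 2 := by rw [← hyy', Finset.mul_sum]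
      _ ≤ ∑ i, h.eigenvalues i * y i ^ 2 := Finset.sum_le_sum fun i _ => hterm i
      _ = (A *ᵥ x) ⬝ᵥ (A *ᵥ x) := by rw [hAx, hxHx]
      _ = ((A - B) *ᵥ x) ⬝ᵥ ((A - B) *ᵥ x) := by rw [hABx]
      _ ≤ (∑ i, ∑ j, (A i j - B i j) ^ 2) * (x ⬝ᵥ x) := by
          have := mulVec_dot_le_frob (A - B) x
          simpa using this
      _ = (∑ i, ∑ j, (A i j - B i j) ^ 2) * (c ⬝ᵥ c) := by rw [hxx]
  exact le_of_mul_le_mul_right chain hcc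
lemma det_fromBlocks_unit {n : Type*} [Fintype n] [DecidableEq n] (A : Matrix n n ℝ)
    (hA : IsUnit A.det) (col : n → ℝ) (row : n → ℝ) (d : ℝ) :
    det (fromBlocks A (Matrix.of fun a (_ : Unit) => col a)
      (Matrix.of fun (_ : Unit) b => row b) (Matrix.of fun (_ : Unit) (_ : Unit) => d))
      = A.det * (d - row ⬝ᵥ (A⁻¹ *ᵥ col)) := by
  letI := A.invertibleOfIsUnitDet hA
  rw [Matrix.det_fromBlocks₁₁]
  congr 1
  rw [Matrix.det_unique]
  simp only [Matrix.sub_apply, Matrix.of_apply, Matrix.mul_apply, Matrix.invOf_eq_nonsing_inv,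
    Matrix.mulVec, dotProduct]
  congr 1
  simp only [Finset.sum_mul, Finset.mul_sum]
  rw [Finset.sum_comm]
  exact Finset.sum_congr rfl fun b _ => Finset.sum_congr rfl fun a _ => by ring
lemma crux {k' m₂ n₂ : ℕ}
    (A₁₁ : Matrix (Fin (k'+1)) (Fin (k'+1)) ℝ) (A₁₂ : Matrix (Fin (k'+1)) (Fin n₂) ℝ)
    (A₂₁ : Matrix (Fin m₂) (Fin (k'+1)) ℝ) (A₂₂ : Matrix (Fin m₂) (Fin n₂) ℝ)
    (ρ : ℝ) (hρ : 1 ≤ ρ)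
    (hcol : ∀ (q : Fin n₂) (j : Fin (k'+1)),
      |(A₁₁.updateCol j (fun i => A₁₂ i q)).det| ≤ ρ * |A₁₁.det|)
    (hrow : ∀ (p : Fin m₂) (i : Fin (k'+1)),
      |(A₁₁.updateRow i (fun j => A₂₁ p j)).det| ≤ ρ * |A₁₁.det|)
    (hloc : ∀ (p : Fin m₂) (q : Fin n₂) (r c : Fin (k'+1) → Fin (k'+1) ⊕ Unit),
      Function.Injective r → Function.Injective c →
      |((Matrix.fromBlocks A₁₁ (Matrix.of fun i (_ : Unit) => A₁₂ i q)
          (Matrix.of fun (_ : Unit) j => A₂₁ p j)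
          (Matrix.of fun (_ : Unit) (_ : Unit) => A₂₂ p q)).submatrix r c).det|
        ≤ ρ * |A₁₁.det|)
    (i j : Fin (k'+1)) :
    singularValue (Matrix.fromBlocks A₁₁ A₁₂ A₂₁ A₂₂) (k'+1)
        * |det (A₁₁.submatrix i.succAbove j.succAbove)|
      ≤ (ρ * Real.sqrt (((m₂:ℝ)+1) * ((n₂:ℝ)+1))) * |A₁₁.det| := by
  classical
  set Ahat := A₁₁.submatrix i.succAbove j.succAbove with hAhat
  have hσ0 : 0 ≤ singularValue (Matrix.fromBlocks A₁₁ A₁₂ A₂₁ A₂₂) (k'+1) := Real.sqrt_nonneg _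
  have hRHS0 : 0 ≤ (ρ * Real.sqrt (((m₂:ℝ)+1) * ((n₂:ℝ)+1))) * |A₁₁.det| := by positivity
  by_cases hdet : Ahat.det = 0
  · rw [hdet]; simpa using hRHS0
  have hunit : IsUnit Ahat.det := isUnit_iff_ne_zero.mpr hdet
  -- the equivalences
  set eI : (Fin k' ⊕ Unit) ≃ Fin (k'+1) :=
    ((finSuccEquiv' i).trans (Equiv.optionEquivSumPUnit (Fin k'))).symm with heI
  set eJ : (Fin k' ⊕ Unit) ≃ Fin (k'+1) :=
    ((finSuccEquiv' j).trans (Equiv.optionEquivSumPUnit (Fin k'))).symm with heJ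
  have heIl : ∀ a, eI (Sum.inl a) = i.succAbove a := by
    intro a; simp [heI, Equiv.optionEquivSumPUnit]
  have heIr : ∀ u, eI (Sum.inr u) = i := by
    intro u; simp [heI, Equiv.optionEquivSumPUnit]
  have heJl : ∀ a, eJ (Sum.inl a) = j.succAbove a := by
    intro a; simp [heJ, Equiv.optionEquivSumPUnit]
  have heJr : ∀ u, eJ (Sum.inr u) = j := by
    intro u; simp [heJ, Equiv.optionEquivSumPUnit]
  -- the blocks
  set R1 : Matrix (Fin k') (Unit ⊕ Fin n₂) ℝ :=
    Matrix.of (fun a q => Sum.elim (fun _ => A₁₁ (i.succAbove a) j)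
      (fun q' => A₁₂ (i.succAbove a) q') q) with hR1
  set C1 : Matrix (Unit ⊕ Fin m₂) (Fin k') ℝ :=
    Matrix.of (fun p b => Sum.elim (fun _ => A₁₁ i (j.succAbove b))
      (fun p' => A₂₁ p' (j.succAbove b)) p) with hC1
  set D1 : Matrix (Unit ⊕ Fin m₂) (Unit ⊕ Fin n₂) ℝ :=
    Matrix.of (fun p q => Sum.elim (fun _ => Sum.elim (fun _ => A₁₁ i j) (fun q' => A₁₂ i q') q)
      (fun p' => Sum.elim (fun _ => A₂₁ p' j) (fun q' => A₂₂ p' q') q) p) with hD1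
  set S : Matrix (Unit ⊕ Fin m₂) (Unit ⊕ Fin n₂) ℝ := D1 - C1 * Ahat⁻¹ * R1 with hSdef
  have hSd : ∀ p q, Ahat.det * S p q =
      det (fromBlocks Ahat (Matrix.of fun a (_ : Unit) => R1 a q)
        (Matrix.of fun (_ : Unit) b => C1 p b)
        (Matrix.of fun (_ : Unit) (_ : Unit) => D1 p q)) := by
    intro p q
    rw [det_fromBlocks_unit Ahat hunit _ _ _]
    congr 1
    have hmm : (C1 * Ahat⁻¹ * R1) p q
        = (fun b => C1 p b) ⬝ᵥ (Ahat⁻¹ *ᵥ (fun a => R1 a q)) := by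
      simp only [Matrix.mul_apply, dotProduct, Matrix.mulVec, Finset.sum_mul,
        Finset.mul_sum]
      rw [Finset.sum_comm]
      exact Finset.sum_congr rfl fun a _ => Finset.sum_congr rfl fun b _ => by ring
    rw [hSdef]
    simp only [Matrix.sub_apply]
    rw [hmm]
  -- bound the bordered determinants
  have hbound : ∀ p q, |det (fromBlocks Ahat (Matrix.of fun a (_ : Unit) => R1 a q)
        (Matrix.of fun (_ : Unit) b => C1 p b)
        (Matrix.of fun (_ : Unit) (_ : Unit) => D1 p q))| ≤ ρ * |A₁₁.det| := by
    intro p q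
    rcases p with u | p' <;> rcases q with v | q'
    · have he : fromBlocks Ahat (Matrix.of fun a (_ : Unit) => R1 a (Sum.inl v))
          (Matrix.of fun (_ : Unit) b => C1 (Sum.inl u) b)
          (Matrix.of fun (_ : Unit) (_ : Unit) => D1 (Sum.inl u) (Sum.inl v))
          = A₁₁.submatrix eI eJ := by
        ext r c
        rcases r with a | u' <;> rcases c with b | v' <;>
          simp [hAhat, hR1, hC1, hD1, heIl, heIr, heJl, heJr]
      rw [he, abs_det_submatrix_equiv_equiv]
      exact le_mul_of_one_le_left (abs_nonneg _) hρ
    · have he : fromBlocks Ahat (Matrix.of fun a (_ : Unit) => R1 a (Sum.inr q'))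
          (Matrix.of fun (_ : Unit) b => C1 (Sum.inl u) b)
          (Matrix.of fun (_ : Unit) (_ : Unit) => D1 (Sum.inl u) (Sum.inr q'))
          = (A₁₁.updateCol j (fun r => A₁₂ r q')).submatrix eI eJ := by
        ext r c
        rcases r with a | u' <;> rcases c with b | v' <;>
          simp [hAhat, hR1, hC1, hD1, heIl, heIr, heJl, heJr, Matrix.updateCol_apply,
            Fin.succAbove_ne]
      rw [he, abs_det_submatrix_equiv_equiv]
      exact hcol q' j
    · have he : fromBlocks Ahat (Matrix.of fun a (_ : Unit) => R1 a (Sum.inl v))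
          (Matrix.of fun (_ : Unit) b => C1 (Sum.inr p') b)
          (Matrix.of fun (_ : Unit) (_ : Unit) => D1 (Sum.inr p') (Sum.inl v))
          = (A₁₁.updateRow i (fun c => A₂₁ p' c)).submatrix eI eJ := by
        ext r c
        rcases r with a | u' <;> rcases c with b | v' <;>
          simp [hAhat, hR1, hC1, hD1, heIl, heIr, heJl, heJr, Matrix.updateRow_apply,
            Fin.succAbove_ne]
      rw [he, abs_det_submatrix_equiv_equiv]
      exact hrow p' i
    · have he : fromBlocks Ahat (Matrix.of fun a (_ : Unit) => R1 a (Sum.inr q'))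
          (Matrix.of fun (_ : Unit) b => C1 (Sum.inr p') b)
          (Matrix.of fun (_ : Unit) (_ : Unit) => D1 (Sum.inr p') (Sum.inr q'))
          = (fromBlocks A₁₁ (Matrix.of fun r (_ : Unit) => A₁₂ r q')
              (Matrix.of fun (_ : Unit) c => A₂₁ p' c)
              (Matrix.of fun (_ : Unit) (_ : Unit) => A₂₂ p' q')).submatrix
              (Sum.map i.succAbove id) (Sum.map j.succAbove id) := by
        ext r c
        rcases r with a | u' <;> rcases c with b | v' <;>
          simp [hAhat, hR1, hC1, hD1]
      have hrinj : Function.Injective ((Sum.map i.succAbove id) ∘ eI.symm) :=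
        ((Fin.succAbove_right_injective (p := i)).sumMap Function.injective_id).comp
          eI.symm.injective
      have hcinj : Function.Injective ((Sum.map j.succAbove id) ∘ eJ.symm) :=
        ((Fin.succAbove_right_injective (p := j)).sumMap Function.injective_id).comp
          eJ.symm.injective
      rw [he, ← abs_det_submatrix_equiv_equiv eI.symm eJ.symm, Matrix.submatrix_submatrix]
      exact hloc p' q' _ _ hrinj hcinj
  have hv0 : 0 < |Ahat.det| := abs_pos.mpr hdet
  set w : ℝ := ρ * |A₁₁.det| / |Ahat.det| with hw
  have hw0 : 0 ≤ w := by positivity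
  have hSabs : ∀ p q, |S p q| ≤ w := by
    intro p q
    rw [hw, le_div_iff₀ hv0]
    calc |S p q| * |Ahat.det| = |Ahat.det * S p q| := by rw [abs_mul]; ring
      _ ≤ ρ * |A₁₁.det| := by rw [hSd p q]; exact hbound p q
  -- the global reindexing
  set eR : (Fin k' ⊕ (Unit ⊕ Fin m₂)) ≃ (Fin (k'+1) ⊕ Fin m₂) :=
    (Equiv.sumAssoc (Fin k') Unit (Fin m₂)).symm.trans
      (eI.sumCongr (Equiv.refl (Fin m₂))) with heR
  set eC : (Fin k' ⊕ (Unit ⊕ Fin n₂)) ≃ (Fin (k'+1) ⊕ Fin n₂) :=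
    (Equiv.sumAssoc (Fin k') Unit (Fin n₂)).symm.trans
      (eJ.sumCongr (Equiv.refl (Fin n₂))) with heC
  have hA' : (fromBlocks A₁₁ A₁₂ A₂₁ A₂₂).submatrix eR eC = fromBlocks Ahat R1 C1 D1 := by
    ext r c
    rcases r with a | u | p <;> rcases c with b | v | q <;>
      simp [heR, heC, hAhat, hR1, hC1, hD1, heIl, heIr, heJl, heJr]
  -- the rank-k' correction
  set P : Matrix (Fin (k'+1) ⊕ Fin m₂) (Fin k') ℝ :=
    (fromRows Ahat C1).submatrix eR.symm id with hP
  set Q : Matrix (Fin k') (Fin (k'+1) ⊕ Fin n₂) ℝ :=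
    (Ahat⁻¹ * fromCols Ahat R1).submatrix id eC.symm with hQ
  have hPQ : fromRows Ahat C1 * (Ahat⁻¹ * fromCols Ahat R1)
      = fromBlocks Ahat R1 C1 (C1 * Ahat⁻¹ * R1) := by
    have h1 : Ahat⁻¹ * fromCols Ahat R1 = fromCols (1 : Matrix (Fin k') (Fin k') ℝ)
        (Ahat⁻¹ * R1) := by
      rw [mul_fromCols, Matrix.nonsing_inv_mul _ hunit]
    rw [h1, fromRows_mul, mul_fromCols, mul_fromCols, Matrix.mul_one, Matrix.mul_one,
      ← Matrix.mul_assoc, Matrix.mul_nonsing_inv _ hunit, Matrix.one_mul,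
      ← Matrix.mul_assoc, fromRows_fromCols_eq_fromBlocks]
  have hdiff : fromBlocks Ahat R1 C1 D1 - fromRows Ahat C1 * (Ahat⁻¹ * fromCols Ahat R1)
      = fromBlocks 0 0 0 S := by
    rw [hPQ]
    ext r c
    rcases r with a | p <;> rcases c with b | q <;>
      simp [hSdef, Matrix.sub_apply]
  set B : Matrix (Fin (k'+1) ⊕ Fin m₂) (Fin (k'+1) ⊕ Fin n₂) ℝ := P * Q with hB
  have hrankB : B.rank < k' + 1 := by
    have h1 : B.rank ≤ P.rank := Matrix.rank_mul_le_left P Q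
    have h2 : P.rank ≤ Fintype.card (Fin k') := Matrix.rank_le_card_width P
    simp only [Fintype.card_fin] at h2
    omega
  have hABdiff : fromBlocks A₁₁ A₁₂ A₂₁ A₂₂ - B
      = (fromBlocks 0 0 0 S).submatrix eR.symm eC.symm := by
    have hA0 : fromBlocks A₁₁ A₁₂ A₂₁ A₂₂
        = (fromBlocks Ahat R1 C1 D1).submatrix eR.symm eC.symm := by
      rw [← hA', Matrix.submatrix_submatrix, Equiv.self_comp_symm, Equiv.self_comp_symm,
        Matrix.submatrix_id_id]
    have hBsub : B = (fromRows Ahat C1 * (Ahat⁻¹ * fromCols Ahat R1)).submatrix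
        eR.symm eC.symm := by
      rw [hB, hP, hQ]
      exact (Matrix.submatrix_mul _ _ _ id _ Function.bijective_id).symm
    rw [hA0, hBsub, ← hdiff]
    ext r c
    simp [Matrix.sub_apply]
  -- Frobenius bound
  have hcard : ((Fintype.card (Unit ⊕ Fin m₂) : ℝ)) = (m₂ : ℝ) + 1 := by
    simp [Fintype.card_sum]; ring
  have hcard' : ((Fintype.card (Unit ⊕ Fin n₂) : ℝ)) = (n₂ : ℝ) + 1 := by
    simp [Fintype.card_sum]; ring
  have hfrob : (∑ r, ∑ c, ((fromBlocks A₁₁ A₁₂ A₂₁ A₂₂ - B) r c)^2)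
      ≤ (((m₂:ℝ)+1) * ((n₂:ℝ)+1)) * w^2 := by
    rw [hABdiff]
    have e1 : ∀ r : Fin (k'+1) ⊕ Fin m₂,
        (∑ c, (((fromBlocks (0 : Matrix (Fin k') (Fin k') ℝ)
          (0 : Matrix (Fin k') (Unit ⊕ Fin n₂) ℝ) (0 : Matrix (Unit ⊕ Fin m₂) (Fin k') ℝ) S)
            (eR.symm r)) (eC.symm c))^2)
        = ∑ c', ((fromBlocks 0 0 0 S) (eR.symm r) c')^2 := fun r =>
      Equiv.sum_comp eC.symm (fun c' => ((fromBlocks 0 0 0 S) (eR.symm r) c')^2)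
    have e2 : (∑ r : Fin (k'+1) ⊕ Fin m₂, ∑ c', ((fromBlocks (0 : Matrix (Fin k') (Fin k') ℝ)
          0 0 S) (eR.symm r) c')^2)
        = ∑ r', ∑ c', ((fromBlocks 0 0 0 S) r' c')^2 :=
      Equiv.sum_comp eR.symm (fun r' => ∑ c', ((fromBlocks 0 0 0 S) r' c')^2)
    calc (∑ r, ∑ c, (((fromBlocks 0 0 0 S).submatrix eR.symm eC.symm) r c)^2)
        = ∑ r', ∑ c', ((fromBlocks (0 : Matrix (Fin k') (Fin k') ℝ) 0 0 S) r' c')^2 := by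
          simp only [Matrix.submatrix_apply]
          rw [← e2]
          exact Finset.sum_congr rfl fun r _ => e1 r
      _ = ∑ p, ∑ q, (S p q)^2 := by
          rw [Fintype.sum_sum_type]
          simp [Fintype.sum_sum_type]
      _ ≤ ∑ _p : Unit ⊕ Fin m₂, ∑ _q : Unit ⊕ Fin n₂, w^2 := by
          refine Finset.sum_le_sum fun p _ => Finset.sum_le_sum fun q _ => ?_
          calc (S p q)^2 = |S p q|^2 := (sq_abs _).symm
            _ ≤ w^2 := pow_le_pow_left₀ (abs_nonneg _) (hSabs p q) 2
      _ = (((m₂:ℝ)+1) * ((n₂:ℝ)+1)) * w^2 := by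
          simp [Finset.sum_const, Finset.card_univ, ← hcard, ← hcard']
          ring
  have hkcard : k' + 1 ≤ Fintype.card (Fin (k'+1) ⊕ Fin n₂) := by
    simp [Fintype.card_sum]
  have hgram := kthLargest_gram_le (fromBlocks A₁₁ A₁₂ A₂₁ A₂₂) B (Nat.le_add_left 1 k')
    hkcard hrankB
  have hlamb : kthLargest (Matrix.isHermitian_conjTranspose_mul_self
      (fromBlocks A₁₁ A₁₂ A₂₁ A₂₂)).eigenvalues (k'+1)
      ≤ (((m₂:ℝ)+1) * ((n₂:ℝ)+1)) * w^2 := by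
    exact le_trans hgram hfrob
  have hsq : Real.sqrt ((((m₂:ℝ)+1) * ((n₂:ℝ)+1)) * w^2)
      = Real.sqrt (((m₂:ℝ)+1) * ((n₂:ℝ)+1)) * w := by
    rw [Real.sqrt_mul (by positivity), Real.sqrt_sq hw0]
  have hσle : singularValue (fromBlocks A₁₁ A₁₂ A₂₁ A₂₂) (k'+1)
      ≤ Real.sqrt (((m₂:ℝ)+1) * ((n₂:ℝ)+1)) * w := by
    rw [← hsq]
    exact Real.sqrt_le_sqrt hlamb
  calc singularValue (fromBlocks A₁₁ A₁₂ A₂₁ A₂₂) (k'+1) * |Ahat.det|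
      ≤ (Real.sqrt (((m₂:ℝ)+1) * ((n₂:ℝ)+1)) * w) * |Ahat.det| :=
        mul_le_mul_of_nonneg_right hσle (abs_nonneg _)
    _ = (ρ * Real.sqrt (((m₂:ℝ)+1) * ((n₂:ℝ)+1))) * |A₁₁.det| := by
        rw [hw]
        field_simp
lemma sigma_min_bound {n : Type*} [Fintype n] [DecidableEq n] [Nonempty n]
    (M : Matrix n n ℝ) (hM : IsUnit M.det) :
    0 ≤ kthLargest (Matrix.isHermitian_conjTranspose_mul_self M).eigenvalues (Fintype.card n) ∧
    1 ≤ (∑ i, ∑ j, (M⁻¹ i j) ^ 2) *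
      kthLargest (Matrix.isHermitian_conjTranspose_mul_self M).eigenvalues (Fintype.card n) := by
  classical
  set h := Matrix.isHermitian_conjTranspose_mul_self M with hh
  have hcard : 1 ≤ Fintype.card n := Fintype.card_pos
  obtain ⟨t, ht⟩ := kthLargest_exists_eq h.eigenvalues hcard le_rfl
  set U : Matrix n n ℝ := (Matrix.IsHermitian.eigenvectorUnitary h : Matrix n n ℝ) with hU
  have hUtU : Uᵀ * U = 1 := by
    have := Matrix.mem_unitaryGroup_iff'.mp (Matrix.IsHermitian.eigenvectorUnitary h).2
    rwa [Matrix.star_eq_conjTranspose, Matrix.conjTranspose_eq_transpose_of_trivial] at this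
  have hUUt : U * Uᵀ = 1 := mul_eq_one_comm.mp hUtU
  have hspec : Uᵀ * (Mᴴ * M) * U = Matrix.diagonal h.eigenvalues := by
    have := Matrix.IsHermitian.conjStarAlgAut_star_eigenvectorUnitary h
    rw [Unitary.conjStarAlgAut_star_apply] at this
    rw [Matrix.star_eq_conjTranspose, Matrix.conjTranspose_eq_transpose_of_trivial] at this
    simp at this
    exact this
  have hGU : (Mᴴ * M) * U = U * Matrix.diagonal h.eigenvalues := by
    calc (Mᴴ * M) * U = (U * Uᵀ) * ((Mᴴ * M) * U) := by rw [hUUt, Matrix.one_mul]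
      _ = U * (Uᵀ * (Mᴴ * M) * U) := by simp only [Matrix.mul_assoc]
      _ = U * Matrix.diagonal h.eigenvalues := by rw [hspec]
  set v : n → ℝ := U *ᵥ Pi.single t 1 with hv
  clear_value v
  have hGv : (Mᴴ * M) *ᵥ v = h.eigenvalues t • v := by
    rw [hv, Matrix.mulVec_mulVec, hGU, ← Matrix.mulVec_mulVec, Matrix.diagonal_mulVec_single,
      ← Matrix.mulVec_smul]
    congr 1
    rw [mul_one, ← Pi.single_smul, smul_eq_mul, mul_one]
  have hvv : v ⬝ᵥ v = 1 := by
    rw [hv, dot_mulVec_mulVec, hUtU, Matrix.one_mulVec]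
    simp [dotProduct, Pi.single_apply]
  have hMv : (M *ᵥ v) ⬝ᵥ (M *ᵥ v) = h.eigenvalues t := by
    rw [dot_mulVec_mulVec, ← Matrix.conjTranspose_eq_transpose_of_trivial, hGv]
    simp only [dotProduct_smul, smul_eq_mul]
    rw [hvv, mul_one]
  have hlam0 : 0 ≤ h.eigenvalues t := by
    rw [← hMv]
    exact Finset.sum_nonneg fun i _ => mul_self_nonneg _
  constructor
  · rw [ht]; exact hlam0
  · have hre : v = M⁻¹ *ᵥ (M *ᵥ v) := by
      rw [Matrix.mulVec_mulVec, Matrix.nonsing_inv_mul _ hM, Matrix.one_mulVec]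
    calc (1:ℝ) = v ⬝ᵥ v := hvv.symm
      _ = (M⁻¹ *ᵥ (M *ᵥ v)) ⬝ᵥ (M⁻¹ *ᵥ (M *ᵥ v)) := by rw [← hre]
      _ ≤ (∑ i, ∑ j, (M⁻¹ i j) ^ 2) * ((M *ᵥ v) ⬝ᵥ (M *ᵥ v)) := mulVec_dot_le_frob _ _
      _ = (∑ i, ∑ j, (M⁻¹ i j) ^ 2) *
          kthLargest (Matrix.isHermitian_conjTranspose_mul_self M).eigenvalues (Fintype.card n) := by
        rw [hMv, ← ht]

/-- Let `A = [[A₁₁, A₁₂], [A₂₁, A₂₂]]` be an `m × n` real matrix whose leading `k × k` block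
`A₁₁` is nonsingular and has local `ρ`-maximum volume in `A` for some `ρ ≥ 1`: exchanging
one column of `A₁₁` with a column of `A₁₂`, one row of `A₁₁` with a row of `A₂₁`, or one
row and one column simultaneously (equivalently, `A₁₁` has global `ρ`-maximum volume in
every `(k+1) × (k+1)` submatrix of `A` containing it) cannot increase the volume of `A₁₁`
by more than the factor `ρ`.  Then `σ_k(A) ≤ ρ k √((m−k+1)(n−k+1)) σ_k(A₁₁)`. -/
theorem sigma_le_of_local_maxvol {k m₂ n₂ : ℕ}
    (A₁₁ : Matrix (Fin k) (Fin k) ℝ) (A₁₂ : Matrix (Fin k) (Fin n₂) ℝ)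
    (A₂₁ : Matrix (Fin m₂) (Fin k) ℝ) (A₂₂ : Matrix (Fin m₂) (Fin n₂) ℝ)
    (hA : IsUnit A₁₁.det) (ρ : ℝ) (hρ : 1 ≤ ρ)
    (hcol : ∀ (q : Fin n₂) (j : Fin k),
      |(A₁₁.updateCol j (fun i => A₁₂ i q)).det| ≤ ρ * |A₁₁.det|)
    (hrow : ∀ (p : Fin m₂) (i : Fin k),
      |(A₁₁.updateRow i (fun j => A₂₁ p j)).det| ≤ ρ * |A₁₁.det|)
    (hloc : ∀ (p : Fin m₂) (q : Fin n₂) (r c : Fin k → Fin k ⊕ Unit),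
      Function.Injective r → Function.Injective c →
      |((Matrix.fromBlocks A₁₁ (Matrix.of fun i (_ : Unit) => A₁₂ i q)
          (Matrix.of fun (_ : Unit) j => A₂₁ p j)
          (Matrix.of fun (_ : Unit) (_ : Unit) => A₂₂ p q)).submatrix r c).det|
        ≤ ρ * |A₁₁.det|) :
    singularValue (Matrix.fromBlocks A₁₁ A₁₂ A₂₁ A₂₂) k ≤
      ρ * k * Real.sqrt (((m₂ : ℝ) + 1) * ((n₂ : ℝ) + 1)) * singularValue A₁₁ k := by
  classical
  rcases k with _ | k'
  · -- k = 0
    have h0 : singularValue (Matrix.fromBlocks A₁₁ A₁₂ A₂₁ A₂₂) 0 = 0 := by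
      unfold singularValue kthLargest
      rw [List.getD_eq_default]
      · exact Real.sqrt_zero
      · simp
    rw [h0]
    simp
  · -- k = k' + 1
    set σ := singularValue (Matrix.fromBlocks A₁₁ A₁₂ A₂₁ A₂₂) (k'+1) with hσdef
    have hσ0 : 0 ≤ σ := Real.sqrt_nonneg _
    set c := ρ * Real.sqrt (((m₂:ℝ)+1) * ((n₂:ℝ)+1)) with hc
    have hc0 : 0 ≤ c := by positivity
    have hdet0 : 0 < |A₁₁.det| := abs_pos.mpr (by
      intro h0; rw [h0] at hA; exact (not_isUnit_zero hA))
    -- entrywise bound on the inverse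
    have hinv_entry : ∀ a b : Fin (k'+1), σ * |A₁₁⁻¹ b a| ≤ c := by
      intro a b
      have h1 : |A₁₁.det| * |A₁₁⁻¹ b a| = |det (A₁₁.submatrix a.succAbove b.succAbove)| := by
        rw [Matrix.inv_def]
        simp only [Matrix.smul_apply, smul_eq_mul]
        rw [abs_mul, Matrix.adjugate_fin_succ_eq_det_submatrix, abs_mul, abs_pow, abs_neg,
          abs_one, one_pow, one_mul, Ring.inverse_eq_inv', abs_inv, ← mul_assoc,
          mul_inv_cancel₀ (ne_of_gt hdet0), one_mul]
      have h2 := crux A₁₁ A₁₂ A₂₁ A₂₂ ρ hρ hcol hrow hloc a b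
      rw [← h1] at h2
      have h3 : (σ * |A₁₁⁻¹ b a|) * |A₁₁.det| ≤ c * |A₁₁.det| := by
        calc (σ * |A₁₁⁻¹ b a|) * |A₁₁.det| = σ * (|A₁₁.det| * |A₁₁⁻¹ b a|) := by ring
          _ ≤ c * |A₁₁.det| := h2
      exact le_of_mul_le_mul_right h3 hdet0
    set F := ∑ i, ∑ j, (A₁₁⁻¹ i j) ^ 2 with hF
    have hσF : σ^2 * F ≤ (((k':ℝ)+1) * c)^2 := by
      calc σ^2 * F = ∑ i, ∑ j, (σ * |A₁₁⁻¹ i j|)^2 := by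
            rw [hF, Finset.mul_sum]
            refine Finset.sum_congr rfl fun i _ => ?_
            rw [Finset.mul_sum]
            refine Finset.sum_congr rfl fun j _ => ?_
            rw [mul_pow, sq_abs]
        _ ≤ ∑ _i : Fin (k'+1), ∑ _j : Fin (k'+1), c^2 := by
            refine Finset.sum_le_sum fun i _ => Finset.sum_le_sum fun j _ => ?_
            exact pow_le_pow_left₀ (by positivity) (hinv_entry j i) 2
        _ = (((k':ℝ)+1) * c)^2 := by
            simp [Finset.sum_const, Finset.card_univ]
            push_cast
            ring
    obtain ⟨hlam0, hlamF⟩ := sigma_min_bound A₁₁ hA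
    rw [Fintype.card_fin] at hlam0 hlamF
    set lam := kthLargest (Matrix.isHermitian_conjTranspose_mul_self A₁₁).eigenvalues (k'+1)
      with hlamdef
    have hσ2 : σ^2 ≤ ((((k':ℝ)+1) * c)^2) * lam := by
      calc σ^2 = σ^2 * 1 := (mul_one _).symm
        _ ≤ σ^2 * (F * lam) := mul_le_mul_of_nonneg_left hlamF (sq_nonneg _)
        _ = (σ^2 * F) * lam := by ring
        _ ≤ ((((k':ℝ)+1) * c)^2) * lam := mul_le_mul_of_nonneg_right hσF hlam0
    have hfinal : σ ≤ (((k':ℝ)+1) * c) * Real.sqrt lam := by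
      have h4 : σ = Real.sqrt (σ^2) := (Real.sqrt_sq hσ0).symm
      rw [h4]
      calc Real.sqrt (σ^2) ≤ Real.sqrt (((((k':ℝ)+1) * c)^2) * lam) := Real.sqrt_le_sqrt hσ2
        _ = (((k':ℝ)+1) * c) * Real.sqrt lam := by
            rw [Real.sqrt_mul (sq_nonneg _), Real.sqrt_sq (by positivity)]
    have hsv : singularValue A₁₁ (k'+1) = Real.sqrt lam := rfl
    rw [hsv]
    calc σ ≤ (((k':ℝ)+1) * c) * Real.sqrt lam := hfinal
      _ = ρ * (↑(k'+1) : ℝ) * Real.sqrt (((m₂:ℝ)+1) * ((n₂:ℝ)+1)) * Real.sqrt lam := by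
          rw [hc]; push_cast; ring
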